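/- Let y be a string of length n > 2 over an alphabet Σ. Then the number of distinct sets EndPos_y(x) over all x ∈ Substr(y) is at most 2n − 1. (Equivalently, the DAWG of y has at most 2n − 1 nodes.) -/

import Mathlib

open List

/-- 1-indexed beginning positions of occurrences of `x` in `y`:
`BegPos y x = { i | 1 ≤ i ≤ |y| - |x| + 1, y[i..i+|x|-1] = x }`. -/
def BegPos {α : Type*} (y x : List α) : Set ℕ :=
  {i | 1 ≤ i ∧ i ≤ y.length - x.length + 1 ∧ x <+: y.drop (i - 1)}

/-- 1-indexed ending positions of occurrences of `x` in `y`: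
`EndPos y x = { i | |x| ≤ i ≤ |y|, y[i-|x|+1..i] = x }`. -/
def EndPos {α : Type*} (y x : List α) : Set ℕ :=
  {i | x.length ≤ i ∧ i ≤ y.length ∧ x <:+ y.take i}

/-- `IsLrepOf y w x` means `w = Lrep_y(x)`: `w` is left-equivalent to `x` in `y`
(`BegPos y w = BegPos y x`) and is the longest such string. -/
def IsLrepOf {α : Type*} (y w x : List α) : Prop :=
  BegPos y w = BegPos y x ∧ ∀ v : List α, BegPos y v = BegPos y x → v.length ≤ w.length

/-- `IsRrepOf y w x` means `w = Rrep_y(x)`: `w` is right-equivalent to `x` in `y`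
(`EndPos y w = EndPos y x`) and is the longest such string. -/
def IsRrepOf {α : Type*} (y w x : List α) : Prop :=
  EndPos y w = EndPos y x ∧ ∀ v : List α, EndPos y v = EndPos y x → v.length ≤ w.length

/-- `x` is a minimal absent word of `y`: `x` is not a substring of `y` and
every proper substring of `x` is a substring of `y`. -/
def IsMAW {α : Type*} (y x : List α) : Prop :=
  ¬ x <:+: y ∧ ∀ w : List α, w <:+: x → w ≠ x → w <:+: y


section Aux
open Set in

lemma laminar_bound : ∀ (n : ℕ) (G : Set ℕ) (F : Set (Set ℕ)), G.Finite → G.ncard = n →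
    (∀ A ∈ F, A ⊆ G) → (∀ A ∈ F, A.Nonempty) →
    (∀ A ∈ F, ∀ B ∈ F, A ∩ B = ∅ ∨ A ⊆ B ∨ B ⊆ A) →
    G ∉ F → F.ncard ≤ 2 * n - 2 := by
  intro n
  induction n using Nat.strong_induction_on with
  | _ n IH =>
    intro G F hGfin hGcard hsub hne hlam hGF
    have hFfin : F.Finite := hGfin.finite_subsets.subset (fun A hA => hsub A hA)
    rcases F.eq_empty_or_nonempty with rfl | hFne
    · simp
    obtain ⟨M, hMF, hMmax⟩ : ∃ M ∈ F, ∀ A ∈ F, M.ncard ≤ A.ncard → M.ncard = A.ncard := by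
      obtain ⟨M, hMF, hM⟩ := Set.exists_max_image F Set.ncard hFfin hFne
      exact ⟨M, hMF, fun A hA hle => le_antisymm hle (hM A hA)⟩
    have hMG : M ⊆ G := hsub M hMF
    have hMfin : M.Finite := hGfin.subset hMG
    have hMne : M.Nonempty := hne M hMF
    have hMneG : M ≠ G := fun h => hGF (h ▸ hMF)
    have hMss : M ⊂ G := ssubset_of_subset_of_ne hMG hMneG
    have hm_lt : M.ncard < n := hGcard ▸ Set.ncard_lt_ncard hMss hGfin
    have hm_pos : 0 < M.ncard := (Set.ncard_pos hMfin).mpr hMne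
    set F₁ : Set (Set ℕ) := {A ∈ F | A ⊆ M} with hF₁
    set F₂ : Set (Set ℕ) := {A ∈ F | A ∩ M = ∅} with hF₂
    have hcover : F ⊆ F₁ ∪ F₂ := by
      intro A hA
      rcases hlam A hA M hMF with h | h | h
      · exact Or.inr ⟨hA, h⟩
      · exact Or.inl ⟨hA, h⟩
      · have hAfin : A.Finite := hGfin.subset (hsub A hA)
        have : M.ncard = A.ncard :=
          hMmax A hA (Set.ncard_le_ncard h hAfin)
        have : M = A := Set.eq_of_subset_of_ncard_le h this.ge hAfin
        exact Or.inl ⟨hA, this ▸ Set.Subset.rfl⟩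
    -- F₁ bound
    have h1 : F₁.ncard ≤ 2 * M.ncard - 1 := by
      have := IH M.ncard hm_lt M (F₁ \ {M}) hMfin rfl
        (fun A hA => hA.1.2) (fun A hA => hne A hA.1.1)
        (fun A hA B hB => hlam A hA.1.1 B hB.1.1)
        (fun h => h.2 rfl)
      have hsub1 : F₁ ⊆ insert M (F₁ \ {M}) := by
        intro A hA
        by_cases hAM : A = M
        · exact hAM ▸ Set.mem_insert _ _
        · exact Set.mem_insert_of_mem _ ⟨hA, hAM⟩
      calc F₁.ncard ≤ (insert M (F₁ \ {M})).ncard :=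
            Set.ncard_le_ncard hsub1 ((hFfin.subset (fun A (hA : A ∈ F₁) => hA.1)).diff |>.insert M)
        _ ≤ (F₁ \ {M}).ncard + 1 := Set.ncard_insert_le _ _
        _ ≤ 2 * M.ncard - 1 := by omega
    -- F₂ bound
    have hGMfin : (G \ M).Finite := hGfin.diff (t := M)
    have hGMne : (G \ M).Nonempty := Set.nonempty_of_ssubset hMss
    have hk_pos : 0 < (G \ M).ncard := (Set.ncard_pos hGMfin).mpr hGMne
    have hmk : M.ncard + (G \ M).ncard = n := by
      have := Set.ncard_diff hMG hMfin
      have h2 := Set.ncard_le_ncard hMG hGfin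
      omega
    have hk_lt : (G \ M).ncard < n := by omega
    have h2sub : ∀ A ∈ F₂, A ⊆ G \ M := by
      intro A hA x hx
      exact ⟨hsub A hA.1 hx, fun hxM => by
        have : x ∈ A ∩ M := ⟨hx, hxM⟩
        rw [hA.2] at this; exact this⟩
    have h2 : F₂.ncard ≤ 2 * (G \ M).ncard - 1 := by
      have := IH (G \ M).ncard hk_lt (G \ M) (F₂ \ {G \ M}) hGMfin rfl
        (fun A hA => h2sub A hA.1) (fun A hA => hne A hA.1.1)
        (fun A hA B hB => hlam A hA.1.1 B hB.1.1)
        (fun h => h.2 rfl)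
      have hsub2 : F₂ ⊆ insert (G \ M) (F₂ \ {G \ M}) := by
        intro A hA
        by_cases hAM : A = G \ M
        · exact hAM ▸ Set.mem_insert _ _
        · exact Set.mem_insert_of_mem _ ⟨hA, hAM⟩
      calc F₂.ncard ≤ (insert (G \ M) (F₂ \ {G \ M})).ncard :=
            Set.ncard_le_ncard hsub2 ((hFfin.subset (fun A (hA : A ∈ F₂) => hA.1)).diff |>.insert _)
        _ ≤ (F₂ \ {G \ M}).ncard + 1 := Set.ncard_insert_le _ _
        _ ≤ 2 * (G \ M).ncard - 1 := by omega
    have htot : F.ncard ≤ F₁.ncard + F₂.ncard :=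
      le_trans (Set.ncard_le_ncard hcover
        ((hFfin.subset (fun A hA => hA.1)).union (hFfin.subset (fun A hA => hA.1))))
        (Set.ncard_union_le _ _)
    omega

variable {α : Type*}

lemma endpos_subset_Icc (y x : List α) (hx : x ≠ []) :
    EndPos y x ⊆ Set.Icc 1 y.length := by
  intro i hi
  have hlen : 1 ≤ x.length := List.length_pos_iff.mpr hx
  exact ⟨le_trans hlen hi.1, hi.2.1⟩

lemma endpos_nonempty {y x : List α} (h : x <:+: y) : (EndPos y x).Nonempty := by
  obtain ⟨s, t, rfl⟩ := h
  refine ⟨s.length + x.length, le_add_self, by simp, ?_⟩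
  have : (s ++ x ++ t).take (s.length + x.length) = s ++ x :=
    List.take_left' (by simp)
  rw [this]
  exact List.suffix_append s x

lemma endpos_anti {y u v : List α} (h : u <:+ v) : EndPos y v ⊆ EndPos y u := by
  intro i hi
  exact ⟨le_trans (List.Sublist.length_le h.sublist) hi.1, hi.2.1,
    h.trans hi.2.2⟩

lemma endpos_laminar (y u v : List α) :
    EndPos y u ∩ EndPos y v = ∅ ∨ EndPos y u ⊆ EndPos y v ∨ EndPos y v ⊆ EndPos y u := by
  by_cases hd : EndPos y u ∩ EndPos y v = ∅
  · exact Or.inl hd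
  right
  obtain ⟨i, hiu, hiv⟩ := Set.nonempty_iff_ne_empty.mpr hd
  rcases suffix_or_suffix_of_suffix hiu.2.2 hiv.2.2 with h | h
  · exact Or.inr (endpos_anti h)
  · exact Or.inl (endpos_anti h)

-- empty string: EndPos y [] contains 0
lemma endpos_nil (y : List α) : (0 : ℕ) ∈ EndPos y [] := by
  exact ⟨le_refl 0, Nat.zero_le _, List.nil_suffix⟩

-- if EndPos y x = Icc 1 n with x nonempty substring, then y is constant
lemma endpos_full {y x : List α} (hn : 0 < y.length) (hx : x ≠ [])
    (hfull : EndPos y x = Set.Icc 1 y.length) : ∃ c, y = List.replicate y.length c := by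
  have h1 : 1 ∈ EndPos y x := by rw [hfull]; exact ⟨le_refl 1, hn⟩
  have hlx : x.length = 1 := le_antisymm h1.1 (List.length_pos_iff.mpr hx)
  obtain ⟨c, rfl⟩ := List.length_eq_one_iff.mp hlx
  refine ⟨c, List.eq_replicate_iff.mpr ⟨rfl, ?_⟩⟩
  intro b hb
  obtain ⟨j, hj, rfl⟩ := List.getElem_of_mem hb
  have hmem : j + 1 ∈ EndPos y [c] := by
    rw [hfull]; exact ⟨by omega, by omega⟩
  obtain ⟨s, hs⟩ := hmem.2.2
  have hslen : s.length = j := by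
    have := congrArg List.length hs
    simp [List.length_take] at this
    omega
  have : (y.take (j + 1))[j]? = some c := by
    rw [← hs, ← hslen]
    exact List.getElem?_concat_length
  rw [List.getElem?_take, if_pos (by omega)] at this
  simp [List.getElem?_eq_getElem hj] at this
  exact this

end Aux

theorem dawg_node_bound {α : Type*} (y : List α) (h : 2 < y.length) :
    ((fun x : List α => EndPos y x) '' {x | x <:+: y}).ncard ≤ 2 * y.length - 1 := by
  set n := y.length with hn
  by_cases hconst : ∃ c, y = List.replicate n c
  · -- constant string: all substrings are replicates
    obtain ⟨c, hc⟩ := hconst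
    have hsubim : (fun x : List α => EndPos y x) '' {x | x <:+: y} ⊆
        (fun k : ℕ => EndPos y (List.replicate k c)) '' Set.Iic n := by
      rintro A ⟨x, hx, rfl⟩
      have hxs : x.Sublist y := hx.sublist
      have hxl : x.length ≤ n := hxs.length_le
      have hxr : x = List.replicate x.length c := by
        refine List.eq_replicate_iff.mpr ⟨rfl, fun b hb => ?_⟩
        have : b ∈ y := hxs.subset hb
        rw [hc] at this
        exact List.eq_of_mem_replicate this
      exact ⟨x.length, hxl, by simp only []; rw [← hxr]⟩
    have hfin : ((fun k : ℕ => EndPos y (List.replicate k c)) '' Set.Iic n).Finite :=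
      (Set.finite_Iic n).image _
    calc ((fun x : List α => EndPos y x) '' {x | x <:+: y}).ncard
        ≤ ((fun k : ℕ => EndPos y (List.replicate k c)) '' Set.Iic n).ncard :=
          Set.ncard_le_ncard hsubim hfin
      _ ≤ (Set.Iic n).ncard := Set.ncard_image_le (Set.finite_Iic n)
      _ = n + 1 := by rw [← Finset.coe_Iic, Set.ncard_coe_finset, Nat.card_Iic]
      _ ≤ 2 * n - 1 := by omega
  · -- non-constant string
    set F : Set (Set ℕ) := (fun x : List α => EndPos y x) '' {x | x <:+: y ∧ x ≠ []} with hF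
    have hdecomp : (fun x : List α => EndPos y x) '' {x | x <:+: y} =
        insert (EndPos y []) F := by
      ext A
      constructor
      · rintro ⟨x, hx, rfl⟩
        by_cases hxe : x = []
        · exact hxe ▸ Set.mem_insert _ _
        · exact Set.mem_insert_of_mem _ ⟨x, ⟨hx, hxe⟩, rfl⟩
      · rintro (rfl | ⟨x, hx, rfl⟩)
        · exact ⟨[], List.nil_infix, rfl⟩
        · exact ⟨x, hx.1, rfl⟩
    have hGnotF : Set.Icc 1 n ∉ F := by
      rintro ⟨x, ⟨hx, hxe⟩, hfull⟩
      exact hconst (endpos_full (by omega) hxe hfull)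
    have hFbound : F.ncard ≤ 2 * n - 2 := by
      refine laminar_bound n (Set.Icc 1 n) F (Set.finite_Icc 1 n) ?_ ?_ ?_ ?_ hGnotF
      · rw [← Finset.coe_Icc, Set.ncard_coe_finset, Nat.card_Icc]; omega
      · rintro A ⟨x, ⟨hx, hxe⟩, rfl⟩; exact endpos_subset_Icc y x hxe
      · rintro A ⟨x, ⟨hx, hxe⟩, rfl⟩; exact endpos_nonempty hx
      · rintro A ⟨u, hu, rfl⟩ B ⟨v, hv, rfl⟩; exact endpos_laminar y u v
    calc ((fun x : List α => EndPos y x) '' {x | x <:+: y}).ncard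
        = (insert (EndPos y []) F).ncard := by rw [hdecomp]
      _ ≤ F.ncard + 1 := Set.ncard_insert_le _ _
      _ ≤ 2 * n - 1 := by omega
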